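/- Let ρ, σ be density matrices on ℂ^d with ρ having sorted spectrum s = (s₁,…,s_d), diagonalized by a unitary U as ρ = U·diag(s)·U†. Suppose the spectrum s is rational with common denominator q, so that qs is a partition. Define the Keyl divergence D_K(ρ‖σ) = Σ_{i=1}^d [s_i ln s_i − (s_i − s_{i+1}) ln lpm_i(U†σU)] (with s_{d+1}=0). Then D_K(ρ‖σ) ∈ [0,∞] and D_K(ρ‖σ) = 0 if and only if σ = ρ. -/

import Mathlib

open scoped ComplexOrder BigOperators Classical

/-- The (real part of the) `i`-th leading principal minor of a matrix. -/
noncomputable def lpm {d : ℕ} (A : Matrix (Fin d) (Fin d) ℂ) (i : ℕ) (h : i ≤ d) : ℝ :=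
  ((A.submatrix (Fin.castLE h) (Fin.castLE h)).det).re

/-- The Keyl divergence `D_K(ρ‖σ) = Σᵢ [sᵢ ln sᵢ − (sᵢ − s_{i+1}) ln lpmᵢ(U†σU)]` determined by
the sorted spectrum `s` of `ρ` (with `s_{d+1} = 0`), evaluated on `A = U†σU`; it equals `⊤` if
some `lpmᵢ(A) = 0` while `sᵢ − s_{i+1} > 0`. -/
noncomputable def keylDiv {d : ℕ} (s : ℕ → ℝ) (A : Matrix (Fin d) (Fin d) ℂ) : EReal :=
  if ∃ i : Fin d, 0 < s i.1 - s (i.1 + 1) ∧ lpm A (i.1 + 1) i.isLt = 0 then ⊤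
  else ((∑ i : Fin d, (s i.1 * Real.log (s i.1)
      - (s i.1 - s (i.1 + 1)) * Real.log (lpm A (i.1 + 1) i.isLt)) : ℝ) : EReal)

open Matrix Finset

section Helpers

variable {n : Type*} [Fintype n] [DecidableEq n]

lemma abel_sum (s f : ℕ → ℝ) (n : ℕ) :
    ∑ i ∈ Finset.range n, (s i - s (i+1)) * (∑ j ∈ Finset.range (i+1), f j)
      = (∑ j ∈ Finset.range n, s j * f j) - s n * ∑ j ∈ Finset.range n, f j := by
  induction n with
  | zero => simp
  | succ n ih =>
    rw [Finset.sum_range_succ, ih, Finset.sum_range_succ (fun j => s j * f j),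
      Finset.sum_range_succ f]
    ring

lemma psd_diag_props {A : Matrix n n ℂ} (hA : A.PosSemidef) (j : n) :
    0 ≤ (A j j).re ∧ (A j j).im = 0 ∧ ((A j j) = 0 → ∀ i, A i j = 0 ∧ A j i = 0) := by
  obtain ⟨B, rfl⟩ := (by
    open scoped MatrixOrder in
    exact CStarAlgebra.nonneg_iff_eq_star_mul_self.mp hA.nonneg : ∃ B : Matrix n n ℂ, A = Bᴴ * B)
  have happ : ∀ i j, (Bᴴ * B) i j = ∑ k, star (B k i) * B k j := by
    intro i j; simp [Matrix.mul_apply, Matrix.conjTranspose_apply]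
  have hself : ∀ j, (Bᴴ * B) j j = ((∑ k, Complex.normSq (B k j) : ℝ) : ℂ) := by
    intro j
    rw [happ]
    push_cast
    congr 1; ext k
    rw [Complex.star_def, ← Complex.normSq_eq_conj_mul_self]
  refine ⟨?_, ?_, ?_⟩
  · rw [hself]
    simp only [Complex.ofReal_re]
    exact Finset.sum_nonneg fun k _ => Complex.normSq_nonneg _
  · rw [hself]; simp
  · intro h i
    have hz : ∀ k, B k j = 0 := by
      have h0 : (∑ k, Complex.normSq (B k j) : ℝ) = 0 := by
        have := hself j; rw [h] at this
        exact_mod_cast this.symm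
      intro k
      have := (Finset.sum_eq_zero_iff_of_nonneg
        (fun k _ => Complex.normSq_nonneg (B k j))).mp h0 k (Finset.mem_univ k)
      exact Complex.normSq_eq_zero.mp this
    constructor
    · rw [happ]; apply Finset.sum_eq_zero; intro k _; rw [hz k, mul_zero]
    · rw [happ]; apply Finset.sum_eq_zero; intro k _; rw [hz k, star_zero, zero_mul]

lemma herm_det_real {A : Matrix n n ℂ} (hA : A.IsHermitian) : A.det = (A.det.re : ℂ) := by
  have h1 : star A.det = A.det := by
    rw [← Matrix.det_conjTranspose, hA.eq]
  have := Complex.conj_eq_iff_re.mp h1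
  exact this.symm

lemma herm_trace_eq {A : Matrix n n ℂ} (hA : A.IsHermitian) :
    A.trace = ((∑ i, hA.eigenvalues i : ℝ) : ℂ) := by
  conv_lhs => rw [hA.spectral_theorem]
  rw [Unitary.conjStarAlgAut_apply]
  rw [Matrix.trace_mul_cycle]
  rw [(Matrix.mem_unitaryGroup_iff'.mp (hA.eigenvectorUnitary).2 : _)]
  rw [Matrix.one_mul, Matrix.trace_diagonal]
  push_cast
  rfl

lemma psd_det_re_nonneg {A : Matrix n n ℂ} (hA : A.PosSemidef) : 0 ≤ A.det.re := by
  rw [hA.1.det_eq_prod_eigenvalues]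
  norm_cast
  exact Finset.prod_nonneg fun i _ => hA.eigenvalues_nonneg i

lemma psd_unit_diag_det {M : Matrix n n ℂ} (hM : M.PosSemidef) (h1 : ∀ i, M i i = 1) :
    M.det.re ≤ 1 ∧ (M.det.re = 1 → M = 1) := by
  set lam := hM.1.eigenvalues with hlam
  have hnn : ∀ i, 0 ≤ lam i := fun i => hM.eigenvalues_nonneg i
  have htr : ∑ i, lam i = (Fintype.card n : ℝ) := by
    have h2 : M.trace = ((∑ i, lam i : ℝ) : ℂ) := herm_trace_eq hM.1
    have h3 : M.trace = (Fintype.card n : ℂ) := by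
      rw [Matrix.trace]
      simp only [Matrix.diag_apply]
      rw [Finset.sum_congr rfl fun i _ => h1 i]
      simp [Finset.card_univ]
    rw [h3] at h2
    exact_mod_cast h2.symm
  have hdet : M.det.re = ∏ i, lam i := by
    rw [hM.1.det_eq_prod_eigenvalues]
    norm_cast
  have hle : ∀ i, lam i ≤ Real.exp (lam i - 1) := by
    intro i
    have := Real.add_one_le_exp (lam i - 1)
    linarith
  have hprodexp : ∏ i, Real.exp (lam i - 1) = 1 := by
    rw [← Real.exp_sum]
    rw [Finset.sum_sub_distrib, htr]
    simp
  constructor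
  · rw [hdet]
    calc ∏ i, lam i ≤ ∏ i, Real.exp (lam i - 1) :=
          Finset.prod_le_prod (fun i _ => hnn i) (fun i _ => hle i)
      _ = 1 := hprodexp
  · intro hdet1
    have hprod1 : ∏ i, lam i = 1 := by rw [← hdet, hdet1]
    have hall : ∀ j, lam j = 1 := by
      intro j
      by_contra hne
      have hstrict : lam j < Real.exp (lam j - 1) := by
        have := Real.add_one_lt_exp (x := lam j - 1) (by intro h; apply hne; linarith)
        linarith
      have hlt : ∏ i, lam i < ∏ i, Real.exp (lam i - 1) := by
        calc ∏ i, lam i ≤ lam j * ∏ i ∈ Finset.univ.erase j, Real.exp (lam i - 1) := by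
              rw [← Finset.mul_prod_erase Finset.univ lam (Finset.mem_univ j)]
              exact mul_le_mul_of_nonneg_left
                (Finset.prod_le_prod (fun i _ => hnn i) (fun i _ => hle i)) (hnn j)
          _ < Real.exp (lam j - 1) * ∏ i ∈ Finset.univ.erase j, Real.exp (lam i - 1) := by
              apply mul_lt_mul_of_pos_right hstrict
              exact Finset.prod_pos fun i _ => Real.exp_pos _
          _ = ∏ i, Real.exp (lam i - 1) :=
              Finset.mul_prod_erase Finset.univ (fun i => Real.exp (lam i - 1))
                (Finset.mem_univ j)
      rw [hprod1, hprodexp] at hlt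
      exact lt_irrefl _ hlt
    have hspec := hM.1.spectral_theorem
    rw [show Matrix.diagonal (RCLike.ofReal ∘ lam) = (1 : Matrix n n ℂ) by
          ext i j
          simp [Matrix.diagonal_apply, Matrix.one_apply, hall]] at hspec
    rw [Unitary.conjStarAlgAut_apply] at hspec
    rw [Matrix.mul_one] at hspec
    rw [hspec]
    exact Matrix.mem_unitaryGroup_iff.mp (hM.1.eigenvectorUnitary).2

lemma psd_hadamard {M : Matrix n n ℂ} (hM : M.PosSemidef) (hpos : ∀ i, 0 < (M i i).re) :
    M.det.re ≤ ∏ i, (M i i).re ∧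
      (M.det.re = ∏ i, (M i i).re → M = Matrix.diagonal (fun i => M i i)) := by
  set c : n → ℝ := fun i => Real.sqrt ((M i i).re) with hc
  have hcpos : ∀ i, 0 < c i := fun i => Real.sqrt_pos.mpr (hpos i)
  have hcsq : ∀ i, c i ^ 2 = (M i i).re := fun i => Real.sq_sqrt (hpos i).le
  have hMdiag : ∀ i, M i i = (((M i i).re : ℝ) : ℂ) := by
    intro i
    have him := (psd_diag_props hM i).2.1
    rw [Complex.ext_iff]
    simp [him]
  set D : Matrix n n ℂ := Matrix.diagonal (fun i => (((c i)⁻¹ : ℝ) : ℂ)) with hD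
  have hDH : Dᴴ = D := by
    rw [hD, Matrix.diagonal_conjTranspose]
    have hst : (star fun i => (((c i)⁻¹ : ℝ) : ℂ)) = fun i => (((c i)⁻¹ : ℝ) : ℂ) := by
      funext i; simp
    rw [hst]
  set N : Matrix n n ℂ := D * M * D with hN
  have hNpsd : N.PosSemidef := by
    have := hM.conjTranspose_mul_mul_same D
    rwa [hDH] at this
  have hN1 : ∀ i, N i i = 1 := by
    intro i
    rw [hN, Matrix.mul_apply]
    have : ∀ j, (D * M) i j = (((c i)⁻¹ : ℝ) : ℂ) * M i j := by
      intro j; rw [hD, Matrix.diagonal_mul]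
    calc ∑ j, (D * M) i j * D j i
        = (D * M) i i * D i i := by
          apply Finset.sum_eq_single
          · intro j _ hj
            rw [hD, Matrix.diagonal_apply_ne _ hj, mul_zero]
          · intro h; exact absurd (Finset.mem_univ i) h
      _ = (((c i)⁻¹ : ℝ) : ℂ) * M i i * (((c i)⁻¹ : ℝ) : ℂ) := by
          rw [this i, hD, Matrix.diagonal_apply_eq]
      _ = 1 := by
          rw [hMdiag i, ← hcsq i]
          push_cast
          have := (hcpos i).ne'
          field_simp
  have hdetD : D.det = ((∏ i, (c i)⁻¹ : ℝ) : ℂ) := by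
    rw [hD, Matrix.det_diagonal]
    push_cast
    rfl
  have hdetN : N.det.re = M.det.re * (∏ i, (c i)⁻¹) ^ 2 := by
    rw [hN, Matrix.det_mul, Matrix.det_mul, hdetD, herm_det_real hM.1]
    have : (((∏ i, (c i)⁻¹ : ℝ) : ℂ) * ((M.det.re : ℝ) : ℂ) * ((∏ i, (c i)⁻¹ : ℝ) : ℂ))
        = (((∏ i, (c i)⁻¹) * M.det.re * (∏ i, (c i)⁻¹) : ℝ) : ℂ) := by push_cast; ring
    rw [this]
    simp only [Complex.ofReal_re]
    ring
  have hprodpos : 0 < ∏ i, (M i i).re := Finset.prod_pos fun i _ => hpos i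
  have hprodc : (∏ i, (c i)⁻¹) ^ 2 = (∏ i, (M i i).re)⁻¹ := by
    rw [← Finset.prod_pow, ← Finset.prod_inv_distrib]
    congr 1; ext i
    rw [inv_pow, hcsq i]
  obtain ⟨hle1, heq1⟩ := psd_unit_diag_det hNpsd hN1
  constructor
  · rw [hdetN, hprodc] at hle1
    calc M.det.re = (M.det.re * (∏ i, (M i i).re)⁻¹) * (∏ i, (M i i).re) := by
          field_simp
      _ ≤ 1 * (∏ i, (M i i).re) := by
          apply mul_le_mul_of_nonneg_right hle1 hprodpos.le
      _ = ∏ i, (M i i).re := one_mul _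
  · intro heq
    have hNdet1 : N.det.re = 1 := by
      rw [hdetN, hprodc, heq]
      field_simp
    have hNone : N = 1 := heq1 hNdet1
    -- recover M = E * N * E with E = diagonal c
    set E : Matrix n n ℂ := Matrix.diagonal (fun i => ((c i : ℝ) : ℂ)) with hE
    have hED : E * D = 1 := by
      rw [hE, hD, Matrix.diagonal_mul_diagonal]
      ext i j
      rcases eq_or_ne i j with rfl | hij
      · rw [Matrix.diagonal_apply_eq, Matrix.one_apply_eq, ← Complex.ofReal_mul,
          mul_inv_cancel₀ (hcpos i).ne', Complex.ofReal_one]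
      · rw [Matrix.diagonal_apply_ne _ hij, Matrix.one_apply_ne hij]
    have hDE : D * E = 1 := by
      rw [hE, hD, Matrix.diagonal_mul_diagonal]
      ext i j
      rcases eq_or_ne i j with rfl | hij
      · rw [Matrix.diagonal_apply_eq, Matrix.one_apply_eq, ← Complex.ofReal_mul,
          inv_mul_cancel₀ (hcpos i).ne', Complex.ofReal_one]
      · rw [Matrix.diagonal_apply_ne _ hij, Matrix.one_apply_ne hij]
    have hMeq : M = E * N * E := by
      rw [hN]
      calc M = 1 * M * 1 := by rw [Matrix.one_mul, Matrix.mul_one]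
        _ = (E * D) * M * (D * E) := by rw [hED, hDE]
        _ = E * (D * M * D) * E := by
            simp only [Matrix.mul_assoc]
    have hfinal : E * N * E = Matrix.diagonal (fun i => M i i) := by
      rw [hNone, Matrix.mul_one, hE, Matrix.diagonal_mul_diagonal]
      apply congrArg Matrix.diagonal
      funext i
      show ((c i : ℝ) : ℂ) * ((c i : ℝ) : ℂ) = M i i
      rw [hMdiag i, ← hcsq i]
      push_cast
      ring
    exact hMeq.trans hfinal

lemma gibbs {ι : Type*} (t : Finset ι) (p a : ι → ℝ)
    (hp : ∀ i ∈ t, 0 < p i) (ha : ∀ i ∈ t, 0 < a i)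
    (hsp : ∑ i ∈ t, p i = 1) (hsa : ∑ i ∈ t, a i ≤ 1) :
    0 ≤ ∑ i ∈ t, (p i * Real.log (p i) - p i * Real.log (a i)) ∧
      (∑ i ∈ t, (p i * Real.log (p i) - p i * Real.log (a i)) = 0 →
        (∀ i ∈ t, a i = p i) ∧ ∑ i ∈ t, a i = 1) := by
  set f : ι → ℝ := fun i => p i * (Real.log (a i) - Real.log (p i)) - (a i - p i) with hf
  have hf_nonpos : ∀ i ∈ t, f i ≤ 0 := by
    intro i hi
    have hpi := hp i hi
    have hai := ha i hi
    have hdiv : Real.log (a i) - Real.log (p i) = Real.log (a i / p i) :=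
      (Real.log_div hai.ne' hpi.ne').symm
    have hlog := Real.log_le_sub_one_of_pos (div_pos hai hpi)
    have : p i * Real.log (a i / p i) ≤ p i * (a i / p i - 1) :=
      mul_le_mul_of_nonneg_left hlog hpi.le
    rw [hf]
    simp only
    rw [hdiv]
    have hexp : p i * (a i / p i - 1) = a i - p i := by field_simp
    linarith
  have hsumf : ∑ i ∈ t, f i =
      -(∑ i ∈ t, (p i * Real.log (p i) - p i * Real.log (a i))) - (∑ i ∈ t, a i - 1) := by
    rw [← hsp, ← Finset.sum_neg_distrib, ← Finset.sum_sub_distrib, ← Finset.sum_sub_distrib]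
    exact Finset.sum_congr rfl fun i hi => by simp only [hf]; ring
  have hfle : ∑ i ∈ t, f i ≤ 0 := Finset.sum_nonpos hf_nonpos
  constructor
  · nlinarith [hfle, hsa]
  · intro h0
    have hfeq : ∑ i ∈ t, f i = -(∑ i ∈ t, a i - 1) := by rw [hsumf, h0]; ring
    have h1 : ∑ i ∈ t, a i = 1 := by nlinarith [hfle, hsa, hfeq]
    have hfzero : ∑ i ∈ t, f i = 0 := by rw [hfeq, h1]; ring
    have heach := (Finset.sum_eq_zero_iff_of_nonpos hf_nonpos).mp hfzero
    refine ⟨?_, h1⟩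
    intro i hi
    have hpi := hp i hi
    have hai := ha i hi
    have hfi := heach i hi
    by_contra hne
    have hdivne : a i / p i ≠ 1 := by
      intro hcontra
      apply hne
      field_simp at hcontra
      linarith
    have hstrict := Real.log_lt_sub_one_of_pos (div_pos hai hpi) hdivne
    have hdiv : Real.log (a i) - Real.log (p i) = Real.log (a i / p i) :=
      (Real.log_div hai.ne' hpi.ne').symm
    have : p i * Real.log (a i / p i) < p i * (a i / p i - 1) :=
      mul_lt_mul_of_pos_left hstrict hpi
    have hexp : p i * (a i / p i - 1) = a i - p i := by field_simp
    rw [hf] at hfi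
    simp only at hfi
    rw [hdiv] at hfi
    linarith

end Helpers

theorem keylDiv_nonneg_and_eq_zero_iff {d : ℕ} (hd : 0 < d)
    (ρ σ U : Matrix (Fin d) (Fin d) ℂ)
    (hρ : ρ.PosSemidef) (hρtr : ρ.trace = 1)
    (hσ : σ.PosSemidef) (hσtr : σ.trace = 1)
    (hU : U ∈ Matrix.unitaryGroup (Fin d) ℂ)
    (s : ℕ → ℝ) (hanti : ∀ i, i < d → s (i + 1) ≤ s i) (hlast : s d = 0)
    (hdiag : ρ = U * Matrix.diagonal (fun i : Fin d => (s i.1 : ℂ)) * star U)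
    (q : ℕ) (hq : 0 < q) (hrat : ∀ i, i < d → ∃ k : ℕ, (q : ℝ) * s i = (k : ℝ)) :
    0 ≤ keylDiv s (star U * σ * U) ∧
      (keylDiv s (star U * σ * U) = 0 ↔ σ = ρ) := by
  classical
  have hU1 : star U * U = 1 := hU.1
  have hU2 : U * star U = 1 := hU.2
  set A : Matrix (Fin d) (Fin d) ℂ := star U * σ * U with hAdef
  have hA : A.PosSemidef := by
    have := hσ.conjTranspose_mul_mul_same U
    rwa [← Matrix.star_eq_conjTranspose] at this
  have htrA : A.trace = 1 := by
    rw [hAdef, Matrix.trace_mul_comm, ← Matrix.mul_assoc, hU2, Matrix.one_mul, hσtr]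
  -- monotonicity facts
  have hs_mono : ∀ j : ℕ, j ≤ d → ∀ i : ℕ, i ≤ j → s j ≤ s i := by
    intro j
    induction j with
    | zero => intro _ i hi; rw [Nat.le_zero.mp hi]
    | succ k ih =>
      intro hkd i hi
      by_cases h : i = k + 1
      · rw [h]
      · exact le_trans (hanti k (by omega)) (ih (by omega) i (by omega))
  have hs_nonneg : ∀ i, i ≤ d → 0 ≤ s i := by
    intro i hi
    have := hs_mono d le_rfl i hi
    rw [hlast] at this
    exact this
  -- sum of s
  have hsum_s : ∑ j ∈ Finset.range d, s j = 1 := by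
    have htrρ : ρ.trace = ((∑ j ∈ Finset.range d, s j : ℝ) : ℂ) := by
      rw [hdiag, Matrix.trace_mul_comm, ← Matrix.mul_assoc, hU1, Matrix.one_mul,
        Matrix.trace_diagonal]
      norm_cast
      exact Fin.sum_univ_eq_sum_range s d
    rw [hρtr] at htrρ
    exact_mod_cast htrρ.symm
  -- diagonal entries
  set a : ℕ → ℝ := fun j => if h : j < d then (A ⟨j, h⟩ ⟨j, h⟩).re else 0 with ha_def
  have ha_eq : ∀ i : Fin d, a i.1 = (A i i).re := by
    intro i
    rw [ha_def]
    simp only [i.isLt, dif_pos]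
  have ha_nonneg : ∀ j, 0 ≤ a j := by
    intro j
    have hrfl : a j = if h : j < d then (A ⟨j, h⟩ ⟨j, h⟩).re else 0 := rfl
    rw [hrfl]
    split
    · exact (psd_diag_props hA _).1
    · exact le_refl 0
  have hsum_a : ∑ j ∈ Finset.range d, a j = 1 := by
    have h1 : (A.trace).re = 1 := by rw [htrA]; exact Complex.one_re
    rw [Matrix.trace, Complex.re_sum] at h1
    rw [← Fin.sum_univ_eq_sum_range a d]
    rw [← h1]
    exact Finset.sum_congr rfl fun i _ => ha_eq i
  -- last positive index r
  have hs0pos : 0 < s 0 := by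
    by_contra h
    push_neg at h
    have hle : ∀ j ∈ Finset.range d, s j ≤ 0 := fun j hj =>
      le_trans (hs_mono j (le_of_lt (Finset.mem_range.mp hj)) 0 (Nat.zero_le _)) h
    have := Finset.sum_nonpos hle
    rw [hsum_s] at this
    linarith
  set r := Nat.findGreatest (fun i => 0 < s i) d with hr_def
  have hrd : r ≤ d := Nat.findGreatest_le d
  have hrpos : 0 < s r := Nat.findGreatest_spec (P := fun i => 0 < s i) (Nat.zero_le d) hs0pos
  have hrlt : r < d := by
    rcases lt_or_eq_of_le hrd with h | h
    · exact h
    · exfalso; rw [h, hlast] at hrpos; exact lt_irrefl _ hrpos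
  have hs_zero : ∀ i, r < i → i ≤ d → s i = 0 := by
    intro i hri hid
    rcases lt_or_eq_of_le hid with h | h
    · have hnp : ¬ 0 < s i := Nat.findGreatest_is_greatest (P := fun i => 0 < s i) hri hid
      have := hs_nonneg i hid
      linarith
    · rw [h, hlast]
  have hsr1 : s (r + 1) = 0 := hs_zero (r+1) (Nat.lt_succ_self r) (by omega)
  have hs_pos_le : ∀ i, i ≤ r → 0 < s i :=
    fun i hi => lt_of_lt_of_le hrpos (hs_mono r (le_of_lt hrlt) i hi)
  -- L
  set L : ℕ → ℝ := fun k => if h : k ≤ d then lpm A k h else 1 with hL_def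
  have hL_eq : ∀ i : Fin d, lpm A (i.1 + 1) i.isLt = L (i.1 + 1) := by
    intro i
    rw [hL_def]
    exact (dif_pos (i.isLt : i.1 + 1 ≤ d)).symm
  have hL_nonneg : ∀ k, k ≤ d → 0 ≤ L k := by
    intro k hk
    have hrfl : L k = if h : k ≤ d then lpm A k h else 1 := rfl
    rw [hrfl, dif_pos hk]
    exact psd_det_re_nonneg (hA.submatrix _)
  -- diag entries of submatrices vs a
  have hsub_diag : ∀ (k : ℕ) (h : k ≤ d) (i : Fin k),
      ((A.submatrix (Fin.castLE h) (Fin.castLE h)) i i).re = a i.1 := by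
    intro k h i
    rw [Matrix.submatrix_apply]
    have hlt : i.1 < d := lt_of_lt_of_le i.isLt h
    have hrfl : a i.1 = if h' : i.1 < d then (A ⟨i.1, h'⟩ ⟨i.1, h'⟩).re else 0 := rfl
    rw [hrfl, dif_pos hlt]
    congr 1 <;> exact Fin.ext rfl
  have hsub_prod : ∀ (k : ℕ) (h : k ≤ d),
      ∏ i : Fin k, ((A.submatrix (Fin.castLE h) (Fin.castLE h)) i i).re
        = ∏ j ∈ Finset.range k, a j := by
    intro k h
    rw [← Fin.prod_univ_eq_prod_range a k]
    exact Finset.prod_congr rfl fun i _ => hsub_diag k h i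
  -- lpm for diagonal A
  have hlpm_diag : A = Matrix.diagonal (fun i : Fin d => (s i.1 : ℂ)) →
      ∀ (k : ℕ) (h : k ≤ d), lpm A k h = ∏ j ∈ Finset.range k, s j := by
    intro hAd k h
    rw [lpm, hAd, Matrix.submatrix_diagonal _ _ (Fin.castLE_injective h), Matrix.det_diagonal]
    have hcast : ∏ i : Fin k, ((fun i : Fin d => ((s i.1 : ℝ) : ℂ)) ∘ Fin.castLE h) i
        = ((∏ j ∈ Finset.range k, s j : ℝ) : ℂ) := by
      simp only [Function.comp_apply, Fin.coe_castLE]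
      rw [Complex.ofReal_prod]
      exact Fin.prod_univ_eq_prod_range (fun j => ((s j : ℝ) : ℂ)) k
    rw [hcast, Complex.ofReal_re]
  -- A diagonal when σ = ρ
  have hAdiag_of : σ = ρ → A = Matrix.diagonal (fun i : Fin d => (s i.1 : ℂ)) := by
    intro hσρ
    rw [hAdef, hσρ, hdiag]
    simp only [Matrix.mul_assoc]
    rw [hU1, Matrix.mul_one, ← Matrix.mul_assoc, hU1, Matrix.one_mul]
  -- recover σ from A diagonal
  have hσ_of : A = Matrix.diagonal (fun i : Fin d => (s i.1 : ℂ)) → σ = ρ := by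
    intro hAd
    have hUAU : U * A * star U = σ := by
      rw [hAdef]
      simp only [Matrix.mul_assoc]
      rw [hU2, Matrix.mul_one, ← Matrix.mul_assoc, hU2, Matrix.one_mul]
    rw [← hUAU, hAd, hdiag]
  rw [keylDiv]
  by_cases hno : ∃ i : Fin d, 0 < s i.1 - s (i.1 + 1) ∧ lpm A (i.1 + 1) i.isLt = 0
  · rw [if_pos hno]
    refine ⟨le_top, ?_⟩
    constructor
    · intro h; exact absurd h (by simp)
    · intro hσρ
      exfalso
      obtain ⟨i, hci, hl0⟩ := hno
      rw [hlpm_diag (hAdiag_of hσρ) (i.1+1) i.isLt] at hl0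
      obtain ⟨j, hj, hsj⟩ := Finset.prod_eq_zero_iff.mp hl0
      have hji : j ≤ i.1 := by
        have := Finset.mem_range.mp hj; omega
      have h1 : s i.1 ≤ s j := hs_mono i.1 (le_of_lt i.isLt) j hji
      have h2 : 0 ≤ s (i.1+1) := hs_nonneg _ i.isLt
      rw [hsj] at h1
      linarith
  · rw [if_neg hno]
    push_neg at hno
    -- positivity of L (r+1)
    have hcr : 0 < s r - s (r+1) := by rw [hsr1]; linarith
    have hLr_ne : lpm A (r+1) hrlt ≠ 0 := by
      have := hno ⟨r, hrlt⟩ hcr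
      exact this
    have hLr_pos : 0 < L (r+1) := by
      have h1 := hL_nonneg (r+1) hrlt
      have h2 : L (r+1) = lpm A (r+1) hrlt := dif_pos hrlt
      rw [h2]
      exact lt_of_le_of_ne (h2 ▸ h1) (Ne.symm hLr_ne)
    -- positivity of a j for j ≤ r
    have ha_pos : ∀ j, j ≤ r → 0 < a j := by
      intro j hj
      have hjd : j < d := lt_of_le_of_lt hj hrlt
      rcases lt_or_eq_of_le (ha_nonneg j) with h | h
      · exact h
      · exfalso
        have hAjj : A ⟨j, hjd⟩ ⟨j, hjd⟩ = 0 := by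
          have hre : (A ⟨j, hjd⟩ ⟨j, hjd⟩).re = 0 := by
            rw [← ha_eq ⟨j, hjd⟩]; exact h.symm
          have him := (psd_diag_props hA ⟨j, hjd⟩).2.1
          exact Complex.ext hre him
        have hrow := (psd_diag_props hA ⟨j, hjd⟩).2.2 hAjj
        apply hLr_ne
        rw [lpm]
        rw [Matrix.det_eq_zero_of_row_eq_zero (⟨j, by omega⟩ : Fin (r+1)) ?_]
        · exact Complex.zero_re
        · intro x
          rw [Matrix.submatrix_apply]
          have hz := (hrow (Fin.castLE hrlt x)).2
          convert hz using 2
          exact Fin.ext rfl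
    -- Hadamard inequality for the blocks up to r+1
    have hhad : ∀ (k : ℕ), k ≤ r + 1 → L k ≤ ∏ j ∈ Finset.range k, a j := by
      intro k hk1
      have hk : k ≤ d := by omega
      have hrfl : L k = lpm A k hk := dif_pos hk
      rw [hrfl, lpm, ← hsub_prod k hk]
      refine (psd_hadamard (hA.submatrix _) ?_).1
      intro i
      rw [hsub_diag k hk i]
      exact ha_pos i.1 (by omega)
    -- the Gibbs part
    have hsub : Finset.range (r+1) ⊆ Finset.range d := by
      intro x hx
      rw [Finset.mem_range] at hx ⊢
      omega
    have hsum_s' : ∑ j ∈ Finset.range (r+1), s j = 1 := by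
      rw [← hsum_s]
      apply Finset.sum_subset hsub
      intro x hx hnx
      rw [Finset.mem_range] at hx hnx
      exact hs_zero x (by omega) (by omega)
    have hsum_a' : ∑ j ∈ Finset.range (r+1), a j ≤ 1 := by
      rw [← hsum_a]
      exact Finset.sum_le_sum_of_subset_of_nonneg hsub (fun j _ _ => ha_nonneg j)
    obtain ⟨hG2nn, hG2eq⟩ := gibbs (Finset.range (r+1)) s a
      (fun i hi => hs_pos_le i (by rw [Finset.mem_range] at hi; omega))
      (fun i hi => ha_pos i (by rw [Finset.mem_range] at hi; omega))
      hsum_s' hsum_a'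
    -- the Hadamard part terms
    have hT_nonneg : ∀ i ∈ Finset.range (r+1),
        0 ≤ (s i - s (i+1)) * ((∑ j ∈ Finset.range (i+1), Real.log (a j))
          - Real.log (L (i+1))) := by
      intro i hi
      rw [Finset.mem_range] at hi
      have hid : i < d := by omega
      have hc_nonneg : 0 ≤ s i - s (i+1) := by
        have := hanti i hid; linarith
      rcases lt_or_eq_of_le hc_nonneg with hc | hc
      · have hLne : lpm A (i+1) hid ≠ 0 := hno ⟨i, hid⟩ hc
        have hLpos : 0 < L (i+1) := by
          have h2 : L (i+1) = lpm A (i+1) hid := dif_pos hid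
          rw [h2]
          exact lt_of_le_of_ne (h2 ▸ hL_nonneg (i+1) hid) (Ne.symm hLne)
        apply mul_nonneg hc_nonneg
        have hlog : Real.log (L (i+1)) ≤ ∑ j ∈ Finset.range (i+1), Real.log (a j) := by
          rw [← Real.log_prod (s := Finset.range (i+1)) (f := a)
            (fun j hj => (ha_pos j (by rw [Finset.mem_range] at hj; omega)).ne')]
          exact Real.log_le_log hLpos (hhad (i+1) (by omega))
        linarith
      · rw [← hc, zero_mul]
    -- sum over Fin d to range
    have hXsum : (∑ i : Fin d, (s i.1 * Real.log (s i.1)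
        - (s i.1 - s (i.1 + 1)) * Real.log (lpm A (i.1 + 1) i.isLt)))
        = ∑ i ∈ Finset.range d,
            (s i * Real.log (s i) - (s i - s (i+1)) * Real.log (L (i+1))) := by
      rw [← Fin.sum_univ_eq_sum_range
        (fun i => s i * Real.log (s i) - (s i - s (i+1)) * Real.log (L (i+1))) d]
      exact Finset.sum_congr rfl fun i _ => by rw [hL_eq i]
    have hXrange : ∑ i ∈ Finset.range d,
          (s i * Real.log (s i) - (s i - s (i+1)) * Real.log (L (i+1)))
        = ∑ i ∈ Finset.range (r+1),
            (s i * Real.log (s i) - (s i - s (i+1)) * Real.log (L (i+1))) := by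
      symm
      apply Finset.sum_subset hsub
      intro x hx hnx
      rw [Finset.mem_range] at hx hnx
      rw [hs_zero x (by omega) (by omega), hs_zero (x+1) (by omega) (by omega)]
      simp
    -- the splitting identity
    have habel := abel_sum s (fun j => Real.log (a j)) (r+1)
    rw [hsr1, zero_mul, sub_zero] at habel
    have hsplit : ∑ i ∈ Finset.range (r+1),
          (s i * Real.log (s i) - (s i - s (i+1)) * Real.log (L (i+1)))
        = (∑ i ∈ Finset.range (r+1), (s i - s (i+1))
            * ((∑ j ∈ Finset.range (i+1), Real.log (a j)) - Real.log (L (i+1))))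
          + ∑ j ∈ Finset.range (r+1), (s j * Real.log (s j) - s j * Real.log (a j)) := by
      have hpt : ∀ i, s i * Real.log (s i) - (s i - s (i+1)) * Real.log (L (i+1))
          = (s i - s (i+1)) * ((∑ j ∈ Finset.range (i+1), Real.log (a j))
              - Real.log (L (i+1)))
            + (s i * Real.log (s i)
              - (s i - s (i+1)) * ∑ j ∈ Finset.range (i+1), Real.log (a j)) := by
        intro i; ring
      rw [Finset.sum_congr rfl (fun i _ => hpt i), Finset.sum_add_distrib]
      congr 1
      rw [Finset.sum_sub_distrib, habel, ← Finset.sum_sub_distrib]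
    -- nonnegativity of the total
    have hG1nn : 0 ≤ ∑ i ∈ Finset.range (r+1), (s i - s (i+1))
        * ((∑ j ∈ Finset.range (i+1), Real.log (a j)) - Real.log (L (i+1))) :=
      Finset.sum_nonneg hT_nonneg
    have hXnn : 0 ≤ ∑ i : Fin d, (s i.1 * Real.log (s i.1)
        - (s i.1 - s (i.1 + 1)) * Real.log (lpm A (i.1 + 1) i.isLt)) := by
      rw [hXsum, hXrange, hsplit]
      linarith
    refine ⟨EReal.coe_nonneg.mpr hXnn, ?_⟩
    rw [EReal.coe_eq_zero]
    constructor
    · -- equality implies σ = ρ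
      intro hX0
      rw [hXsum, hXrange, hsplit] at hX0
      have hG1z : ∑ i ∈ Finset.range (r+1), (s i - s (i+1))
          * ((∑ j ∈ Finset.range (i+1), Real.log (a j)) - Real.log (L (i+1))) = 0 := by
        linarith
      have hG2z : ∑ j ∈ Finset.range (r+1), (s j * Real.log (s j) - s j * Real.log (a j))
          = 0 := by linarith
      obtain ⟨haeq, hsa1⟩ := hG2eq hG2z
      -- a j = 0 for r < j < d
      have ha0 : ∀ j, r < j → j < d → a j = 0 := by
        intro j hrj hjd
        have hsd : ∑ x ∈ Finset.range d \ Finset.range (r+1), a x = 0 := by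
          rw [Finset.sum_sdiff_eq_sub hsub, hsum_a, hsa1, sub_self]
        have hmem : j ∈ Finset.range d \ Finset.range (r+1) := by
          rw [Finset.mem_sdiff, Finset.mem_range, Finset.mem_range]
          omega
        exact (Finset.sum_eq_zero_iff_of_nonneg
          (fun x _ => ha_nonneg x)).mp hsd j hmem
      -- Hadamard equality at r+1
      have hTr := (Finset.sum_eq_zero_iff_of_nonneg hT_nonneg).mp hG1z r
        (Finset.self_mem_range_succ r)
      have hbr : ∑ j ∈ Finset.range (r+1), Real.log (a j) = Real.log (L (r+1)) := by
        rcases mul_eq_zero.mp hTr with h | h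
        · exact absurd h (by linarith)
        · linarith
      have hprod_pos : 0 < ∏ j ∈ Finset.range (r+1), a j :=
        Finset.prod_pos (fun j hj => ha_pos j (by rw [Finset.mem_range] at hj; omega))
      have hLeq : L (r+1) = ∏ j ∈ Finset.range (r+1), a j := by
        have h1 : Real.log (L (r+1)) = Real.log (∏ j ∈ Finset.range (r+1), a j) := by
          rw [← hbr, Real.log_prod (s := Finset.range (r+1)) (f := a)
            (fun j hj => (ha_pos j (by rw [Finset.mem_range] at hj; omega)).ne')]
        have := congrArg Real.exp h1
        rwa [Real.exp_log hLr_pos, Real.exp_log hprod_pos] at this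
      -- apply Hadamard equality
      have hrd1 : r + 1 ≤ d := hrlt
      have hMr_pos : ∀ i : Fin (r+1),
          0 < ((A.submatrix (Fin.castLE hrd1) (Fin.castLE hrd1)) i i).re := by
        intro i
        rw [hsub_diag (r+1) hrd1 i]
        exact ha_pos i.1 (by omega)
      have hMdet : (A.submatrix (Fin.castLE hrd1) (Fin.castLE hrd1)).det.re
          = ∏ i : Fin (r+1), ((A.submatrix (Fin.castLE hrd1) (Fin.castLE hrd1)) i i).re := by
        rw [hsub_prod (r+1) hrd1]
        have h2 : L (r+1) = lpm A (r+1) hrd1 := dif_pos hrd1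
        rw [← hLeq, h2, lpm]
      have hMr_diag := (psd_hadamard (hA.submatrix _) hMr_pos).2 hMdet
      -- conclude A is diagonal
      have hAdiag : A = Matrix.diagonal (fun i : Fin d => (s i.1 : ℂ)) := by
        ext i j
        by_cases hij : i = j
        · subst hij
          rw [Matrix.diagonal_apply_eq]
          by_cases hi : i.1 ≤ r
          · have hre : (A i i).re = s i.1 := by
              rw [← ha_eq i]
              exact haeq i.1 (by rw [Finset.mem_range]; omega)
            have him := (psd_diag_props hA i).2.1
            exact Complex.ext (by rw [hre, Complex.ofReal_re]) (by rw [him, Complex.ofReal_im])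
          · have hre : (A i i).re = 0 := by
              rw [← ha_eq i]
              exact ha0 i.1 (by omega) i.isLt
            have him := (psd_diag_props hA i).2.1
            have hs0 : s i.1 = 0 := hs_zero i.1 (by omega) (le_of_lt i.isLt)
            rw [hs0]
            exact Complex.ext (by rw [hre]; simp) (by rw [him]; simp)
        · rw [Matrix.diagonal_apply_ne _ hij]
          by_cases hi : i.1 ≤ r ∧ j.1 ≤ r
          · have hval : A i j = (A.submatrix (Fin.castLE hrd1) (Fin.castLE hrd1))
                ⟨i.1, by omega⟩ ⟨j.1, by omega⟩ := by
              rw [Matrix.submatrix_apply]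
              congr 1 <;> exact Fin.ext rfl
            rw [hval, hMr_diag, Matrix.diagonal_apply_ne]
            intro hcon
            apply hij
            have := congrArg Fin.val hcon
            exact Fin.ext this
          · push_neg at hi
            rcases Nat.lt_or_ge r i.1 with hri | hri
            · -- row i is zero
              have hAii : A i i = 0 := by
                have hre : (A i i).re = 0 := by
                  rw [← ha_eq i]; exact ha0 i.1 hri i.isLt
                exact Complex.ext hre ((psd_diag_props hA i).2.1)
              exact ((psd_diag_props hA i).2.2 hAii j).2
            · have hrj : r < j.1 := hi hri
              have hAjj : A j j = 0 := by
                have hre : (A j j).re = 0 := by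
                  rw [← ha_eq j]; exact ha0 j.1 hrj j.isLt
                exact Complex.ext hre ((psd_diag_props hA j).2.1)
              exact ((psd_diag_props hA j).2.2 hAjj i).1
      exact hσ_of hAdiag
    · -- σ = ρ implies the sum is zero
      intro hσρ
      have hAd := hAdiag_of hσρ
      have haseq : ∀ j, j < d → a j = s j := by
        intro j hj
        rw [ha_eq ⟨j, hj⟩, hAd, Matrix.diagonal_apply_eq, Complex.ofReal_re]
      have hLd : ∀ i, i < d → L (i+1) = ∏ j ∈ Finset.range (i+1), s j := by
        intro i hi
        have h2 : L (i+1) = lpm A (i+1) hi := dif_pos hi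
        rw [h2, hlpm_diag hAd (i+1) hi]
      rw [hXsum, hXrange]
      have hpt : ∀ i ∈ Finset.range (r+1),
          s i * Real.log (s i) - (s i - s (i+1)) * Real.log (L (i+1))
          = s i * Real.log (s i)
            - (s i - s (i+1)) * ∑ j ∈ Finset.range (i+1), Real.log (s j) := by
        intro i hi
        rw [Finset.mem_range] at hi
        rw [hLd i (by omega), Real.log_prod (s := Finset.range (i+1)) (f := s)
          (fun j hj => (hs_pos_le j (by rw [Finset.mem_range] at hj; omega)).ne')]
      rw [Finset.sum_congr rfl hpt]
      have habel2 := abel_sum s (fun j => Real.log (s j)) (r+1)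
      rw [hsr1, zero_mul, sub_zero] at habel2
      rw [Finset.sum_sub_distrib, habel2, sub_self]
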